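/- Commutativity relations of the symbol algebra on trace-free symmetric two-tensors: as endomorphisms of Sym²₀(ℝ^m) one has Y₂Y₅ = Y₅Y₂ = Y₅² = ((m−1)/m)·Y₅ and Y₂² = (1/2)·Y₂ + ((m−2)/(2m))·Y₅. In particular Y₂ and Y₅ commute, so the algebra generated by the identity, Y₂ and Y₅ is commutative. -/

import Mathlib

open Matrix

namespace NLT

/-- `|ξ|²`, the squared Euclidean norm of `ξ ∈ ℝ^m`. -/
noncomputable def nsq {m : ℕ} (ξ : Fin m → ℝ) : ℝ := ∑ i, ξ i ^ 2

/-- `(X₁φ)_{αβ} = δ_{αβ} tr φ`. -/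
noncomputable def X1 {m : ℕ} (φ : Matrix (Fin m) (Fin m) ℝ) : Matrix (Fin m) (Fin m) ℝ :=
  Matrix.of fun α β => (if α = β then (1 : ℝ) else 0) * φ.trace

/-- `(X₂φ)_{αβ} = (1/(2|ξ|²)) (ξ_α (φξ)_β + ξ_β (φξ)_α)`. -/
noncomputable def X2 {m : ℕ} (ξ : Fin m → ℝ) (φ : Matrix (Fin m) (Fin m) ℝ) :
    Matrix (Fin m) (Fin m) ℝ :=
  Matrix.of fun α β => (1 / (2 * nsq ξ)) * (ξ α * φ.mulVec ξ β + ξ β * φ.mulVec ξ α)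

/-- `(X₃φ)_{αβ} = (1/|ξ|²) ξ_α ξ_β tr φ`. -/
noncomputable def X3 {m : ℕ} (ξ : Fin m → ℝ) (φ : Matrix (Fin m) (Fin m) ℝ) :
    Matrix (Fin m) (Fin m) ℝ :=
  Matrix.of fun α β => (1 / nsq ξ) * (ξ α * ξ β * φ.trace)

/-- `(X₄φ)_{αβ} = (1/|ξ|²) δ_{αβ} ⟨ξ, φξ⟩`. -/
noncomputable def X4 {m : ℕ} (ξ : Fin m → ℝ) (φ : Matrix (Fin m) (Fin m) ℝ) :
    Matrix (Fin m) (Fin m) ℝ :=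
  Matrix.of fun α β => (1 / nsq ξ) * (if α = β then (1 : ℝ) else 0) * (ξ ⬝ᵥ φ.mulVec ξ)

/-- `(X₅φ)_{αβ} = (1/|ξ|⁴) ξ_α ξ_β ⟨ξ, φξ⟩`. -/
noncomputable def X5 {m : ℕ} (ξ : Fin m → ℝ) (φ : Matrix (Fin m) (Fin m) ℝ) :
    Matrix (Fin m) (Fin m) ℝ :=
  Matrix.of fun α β => (1 / (nsq ξ) ^ 2) * (ξ α * ξ β * (ξ ⬝ᵥ φ.mulVec ξ))

/-- `Y₂ = X₂ − (1/m) X₄`, regarded on trace-free symmetric two-tensors. -/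
noncomputable def Y2 {m : ℕ} (ξ : Fin m → ℝ) (φ : Matrix (Fin m) (Fin m) ℝ) :
    Matrix (Fin m) (Fin m) ℝ :=
  X2 ξ φ - ((1 : ℝ) / m) • X4 ξ φ

/-- `Y₅ = X₅ − (1/m) X₄`, regarded on trace-free symmetric two-tensors. -/
noncomputable def Y5 {m : ℕ} (ξ : Fin m → ℝ) (φ : Matrix (Fin m) (Fin m) ℝ) :
    Matrix (Fin m) (Fin m) ℝ :=
  X5 ξ φ - ((1 : ℝ) / m) • X4 ξ φ

lemma nsq_ne_zero {m : ℕ} {ξ : Fin m → ℝ} (hξ : ξ ≠ 0) : nsq ξ ≠ 0 := by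
  have h : 0 < nsq ξ := by
    obtain ⟨i, hi⟩ : ∃ i, ξ i ≠ 0 := by
      by_contra h; push_neg at h; exact hξ (funext h)
    exact Finset.sum_pos' (fun j _ => sq_nonneg _) ⟨i, Finset.mem_univ i, by positivity⟩
  exact ne_of_gt h

lemma sum_self {m : ℕ} (ξ : Fin m → ℝ) : ∑ j, ξ j * ξ j = nsq ξ := by simp [nsq, sq]

lemma entry2 {m : ℕ} (ξ : Fin m → ℝ) (ψ : Matrix (Fin m) (Fin m) ℝ) (α β : Fin m) :
    Y2 ξ ψ α β = (1 / (2 * nsq ξ)) * (ξ α * ψ.mulVec ξ β + ξ β * ψ.mulVec ξ α)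
      - (1 / m) * ((1 / nsq ξ) * (if α = β then (1 : ℝ) else 0) * (ξ ⬝ᵥ ψ.mulVec ξ)) := rfl

lemma entry5 {m : ℕ} (ξ : Fin m → ℝ) (ψ : Matrix (Fin m) (Fin m) ℝ) (α β : Fin m) :
    Y5 ξ ψ α β = (1 / (nsq ξ) ^ 2) * (ξ α * ξ β * (ξ ⬝ᵥ ψ.mulVec ξ))
      - (1 / m) * ((1 / nsq ξ) * (if α = β then (1 : ℝ) else 0) * (ξ ⬝ᵥ ψ.mulVec ξ)) := rfl

lemma mv5 {m : ℕ} {ξ : Fin m → ℝ} (hξ : ξ ≠ 0) (φ : Matrix (Fin m) (Fin m) ℝ) (β : Fin m) :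
    (Y5 ξ φ).mulVec ξ β
      = ((1 : ℝ) - 1 / m) / nsq ξ * (ξ β * (ξ ⬝ᵥ φ.mulVec ξ)) := by
  have hs := nsq_ne_zero hξ
  have : (Y5 ξ φ).mulVec ξ β = ∑ j, Y5 ξ φ β j * ξ j := rfl
  rw [this]
  simp_rw [entry5]
  set q := ξ ⬝ᵥ φ.mulVec ξ with hq
  have h1 : ∀ j, ((1 / (nsq ξ) ^ 2) * (ξ β * ξ j * q)
        - (1 / m) * ((1 / nsq ξ) * (if β = j then (1 : ℝ) else 0) * q)) * ξ j
      = (1 / (nsq ξ) ^ 2 * (ξ β * q)) * (ξ j * ξ j)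
        - (1 / m * (1 / nsq ξ) * q) * ((if β = j then (1 : ℝ) else 0) * ξ j) := by
    intro j; ring
  rw [Finset.sum_congr rfl fun j _ => h1 j, Finset.sum_sub_distrib, ← Finset.mul_sum,
    ← Finset.mul_sum, sum_self]
  simp only [ite_mul, one_mul, zero_mul, Finset.sum_ite_eq, Finset.mem_univ, if_true]
  field_simp

lemma mv2 {m : ℕ} {ξ : Fin m → ℝ} (hξ : ξ ≠ 0) (φ : Matrix (Fin m) (Fin m) ℝ) (β : Fin m) :
    (Y2 ξ φ).mulVec ξ β
      = (1 / 2 : ℝ) * φ.mulVec ξ β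
        + (1 / 2 - 1 / m : ℝ) / nsq ξ * (ξ β * (ξ ⬝ᵥ φ.mulVec ξ)) := by
  have hs := nsq_ne_zero hξ
  have h0 : (Y2 ξ φ).mulVec ξ β = ∑ j, Y2 ξ φ β j * ξ j := rfl
  rw [h0]
  simp_rw [entry2]
  set q := ξ ⬝ᵥ φ.mulVec ξ with hq
  have h1 : ∀ j, ((1 / (2 * nsq ξ)) * (ξ β * φ.mulVec ξ j + ξ j * φ.mulVec ξ β)
        - (1 / m) * ((1 / nsq ξ) * (if β = j then (1 : ℝ) else 0) * q)) * ξ j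
      = (1 / (2 * nsq ξ) * ξ β) * (ξ j * φ.mulVec ξ j)
        + (1 / (2 * nsq ξ) * φ.mulVec ξ β) * (ξ j * ξ j)
        - (1 / m * (1 / nsq ξ) * q) * ((if β = j then (1 : ℝ) else 0) * ξ j) := by
    intro j; ring
  rw [Finset.sum_congr rfl fun j _ => h1 j, Finset.sum_sub_distrib, Finset.sum_add_distrib,
    ← Finset.mul_sum, ← Finset.mul_sum, ← Finset.mul_sum, sum_self]
  have h2 : ∑ j, ξ j * φ.mulVec ξ j = q := rfl
  rw [h2]
  simp only [ite_mul, one_mul, zero_mul, Finset.sum_ite_eq, Finset.mem_univ, if_true]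
  field_simp
  ring

lemma dv5 {m : ℕ} {ξ : Fin m → ℝ} (hξ : ξ ≠ 0) (φ : Matrix (Fin m) (Fin m) ℝ) :
    ξ ⬝ᵥ (Y5 ξ φ).mulVec ξ = ((1 : ℝ) - 1 / m) * (ξ ⬝ᵥ φ.mulVec ξ) := by
  have hs := nsq_ne_zero hξ
  have h0 : ξ ⬝ᵥ (Y5 ξ φ).mulVec ξ = ∑ i, ξ i * (Y5 ξ φ).mulVec ξ i := rfl
  rw [h0]
  simp_rw [mv5 hξ]
  set q := ξ ⬝ᵥ φ.mulVec ξ with hq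
  have h1 : ∀ i, ξ i * (((1 : ℝ) - 1 / m) / nsq ξ * (ξ i * q))
      = (((1 : ℝ) - 1 / m) / nsq ξ * q) * (ξ i * ξ i) := by intro i; ring
  rw [Finset.sum_congr rfl fun i _ => h1 i, ← Finset.mul_sum, sum_self]
  field_simp

lemma dv2 {m : ℕ} {ξ : Fin m → ℝ} (hξ : ξ ≠ 0) (φ : Matrix (Fin m) (Fin m) ℝ) :
    ξ ⬝ᵥ (Y2 ξ φ).mulVec ξ = ((1 : ℝ) - 1 / m) * (ξ ⬝ᵥ φ.mulVec ξ) := by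
  have hs := nsq_ne_zero hξ
  have h0 : ξ ⬝ᵥ (Y2 ξ φ).mulVec ξ = ∑ i, ξ i * (Y2 ξ φ).mulVec ξ i := rfl
  rw [h0]
  simp_rw [mv2 hξ]
  set q := ξ ⬝ᵥ φ.mulVec ξ with hq
  have h1 : ∀ i, ξ i * ((1 / 2 : ℝ) * φ.mulVec ξ i + (1 / 2 - 1 / m : ℝ) / nsq ξ * (ξ i * q))
      = (1 / 2 : ℝ) * (ξ i * φ.mulVec ξ i)
        + ((1 / 2 - 1 / m : ℝ) / nsq ξ * q) * (ξ i * ξ i) := by intro i; ring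
  rw [Finset.sum_congr rfl fun i _ => h1 i, Finset.sum_add_distrib, ← Finset.mul_sum,
    ← Finset.mul_sum, sum_self]
  have h2 : ∑ i, ξ i * φ.mulVec ξ i = q := rfl
  rw [h2]
  field_simp
  ring

set_option maxHeartbeats 1600000 in
/-- Commutativity relations of the symbol algebra on trace-free symmetric two-tensors:
`Y₂Y₅ = Y₅Y₂ = Y₅² = ((m−1)/m)·Y₅` and `Y₂² = (1/2)·Y₂ + ((m−2)/(2m))·Y₅`;
in particular `Y₂` and `Y₅` commute. -/
theorem Y_relations (m : ℕ) (hm : 2 ≤ m) (ξ : Fin m → ℝ) (hξ : ξ ≠ 0)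
    (φ : Matrix (Fin m) (Fin m) ℝ) (hφ : φ.IsSymm) (hφ0 : φ.trace = 0) :
    Y2 ξ (Y5 ξ φ) = (((m : ℝ) - 1) / m) • Y5 ξ φ ∧
    Y5 ξ (Y2 ξ φ) = (((m : ℝ) - 1) / m) • Y5 ξ φ ∧
    Y5 ξ (Y5 ξ φ) = (((m : ℝ) - 1) / m) • Y5 ξ φ ∧
    Y2 ξ (Y2 ξ φ) = (1 / 2 : ℝ) • Y2 ξ φ + (((m : ℝ) - 2) / (2 * m)) • Y5 ξ φ ∧
    Y2 ξ (Y5 ξ φ) = Y5 ξ (Y2 ξ φ) := by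
  have hs := nsq_ne_zero hξ
  have hm0 : (m : ℝ) ≠ 0 := by positivity
  have e1 : Y2 ξ (Y5 ξ φ) = (((m : ℝ) - 1) / m) • Y5 ξ φ := by
    ext α β
    rw [Matrix.smul_apply, entry2, mv5 hξ, mv5 hξ, dv5 hξ, entry5, smul_eq_mul]
    split_ifs with hab <;> field_simp <;> ring
  have e2 : Y5 ξ (Y2 ξ φ) = (((m : ℝ) - 1) / m) • Y5 ξ φ := by
    ext α β
    rw [Matrix.smul_apply, entry5 ξ (Y2 ξ φ), dv2 hξ, entry5, smul_eq_mul]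
    split_ifs with hab <;> field_simp <;> ring
  have e3 : Y5 ξ (Y5 ξ φ) = (((m : ℝ) - 1) / m) • Y5 ξ φ := by
    ext α β
    rw [Matrix.smul_apply, entry5 ξ (Y5 ξ φ), dv5 hξ, entry5, smul_eq_mul]
    split_ifs with hab <;> field_simp <;> ring
  have e4 : Y2 ξ (Y2 ξ φ) = (1 / 2 : ℝ) • Y2 ξ φ + (((m : ℝ) - 2) / (2 * m)) • Y5 ξ φ := by
    ext α β
    rw [Matrix.add_apply, Matrix.smul_apply, Matrix.smul_apply, entry2 ξ (Y2 ξ φ),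
      mv2 hξ, mv2 hξ, dv2 hξ, entry2 ξ φ, entry5 ξ φ, smul_eq_mul, smul_eq_mul]
    split_ifs with hab <;> field_simp <;> ring
  exact ⟨e1, e2, e3, e4, e1.trans e2.symm⟩

end NLT
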